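/- Convergence of the Cauchy two-matrix eigenvalue integral: the function (x,y) ↦ Δ(x)² Δ(y)² exp(−(N/T) ∑_{i=1}^N (V₁(x_i)+V₂(y_i))) · ∏_{i,j=1}^N (x_i+y_j)^{−1} is integrable on (0,∞)^N × (0,∞)^N with respect to Lebesgue measure, and its integral Z is strictly positive. -/

import Mathlib

open MeasureTheory

section Aux

open Finset

private lemma prod_split_aux {N : ℕ} (f : Fin N → Fin N → ℝ) :
    ∏ i, ∏ j, f i j =
      (∏ i, ∏ j ∈ Finset.Ioi i, f i j) * (∏ i, ∏ j ∈ Finset.Ioi i, f j i) * ∏ i, f i i := by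
  have huniv : ∀ i : Fin N, (Finset.univ : Finset (Fin N))
      = insert i (Finset.Iio i ∪ Finset.Ioi i) := by
    intro i; ext j
    simp only [Finset.mem_univ, Finset.mem_insert, Finset.mem_union, Finset.mem_Iio,
      Finset.mem_Ioi, true_iff]
    rcases lt_trichotomy j i with h | h | h
    · exact Or.inr (Or.inl h)
    · exact Or.inl h
    · exact Or.inr (Or.inr h)
  have hswap : ∏ i, ∏ j ∈ Finset.Iio i, f i j = ∏ j, ∏ i ∈ Finset.Ioi j, f i j := by
    refine Finset.prod_comm' ?_
    intro i j
    simp [Finset.mem_Iio, Finset.mem_Ioi]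
  calc ∏ i, ∏ j, f i j
      = ∏ i, (f i i * ((∏ j ∈ Finset.Iio i, f i j) * ∏ j ∈ Finset.Ioi i, f i j)) := by
        refine Finset.prod_congr rfl fun i _ => ?_
        rw [huniv i, Finset.prod_insert (by simp), Finset.prod_union (by
          simp only [Finset.disjoint_left, Finset.mem_Iio, Finset.mem_Ioi]
          intro a ha; exact not_lt.mpr (le_of_lt ha))]
    _ = (∏ i, ∏ j ∈ Finset.Ioi i, f i j) * (∏ i, ∏ j ∈ Finset.Ioi i, f j i) * ∏ i, f i i := by
        rw [Finset.prod_mul_distrib, Finset.prod_mul_distrib, hswap]; ring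

private lemma abs_vdm_perm {N : ℕ} (x : Fin N → ℝ) (σ : Equiv.Perm (Fin N)) :
    |∏ i, ∏ j ∈ Finset.Ioi i, (x (σ j) - x (σ i))| = |∏ i, ∏ j ∈ Finset.Ioi i, (x j - x i)| := by
  rw [← Matrix.det_vandermonde, ← Matrix.det_vandermonde]
  have h : Matrix.vandermonde (fun i => x (σ i))
      = (Matrix.vandermonde x).submatrix σ (Equiv.refl _) := rfl
  rw [h, Matrix.abs_det_submatrix_equiv_equiv]

private lemma prod_sqrt_aux {N : ℕ} (z : Fin N → ℝ) (hz : ∀ i, 0 ≤ z i) :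
    ∏ i, Real.sqrt (z i) = Real.sqrt (∏ i, z i) := by
  induction (Finset.univ : Finset (Fin N)) using Finset.cons_induction with
  | empty => simp
  | cons a s ha ih => rw [Finset.prod_cons, Finset.prod_cons, ih, ← Real.sqrt_mul (hz a)]

private lemma key_mono {N : ℕ} (x y : Fin N → ℝ) (hx : ∀ i, 0 < x i) (hy : ∀ i, 0 < y i)
    (hxm : Monotone x) (hym : Monotone y) :
    (∏ i, ∏ j ∈ Finset.Ioi i, (x j - x i)) * (∏ i, ∏ j ∈ Finset.Ioi i, (y j - y i)) *
      ∏ i, Real.sqrt (x i * y i) ≤ ∏ i, ∏ j, (x i + y j) := by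
  rw [prod_split_aux (fun i j => x i + y j)]
  have h1 : (∏ i, ∏ j ∈ Finset.Ioi i, (x j - x i)) ≤ ∏ i, ∏ j ∈ Finset.Ioi i, (x j + y i) := by
    refine Finset.prod_le_prod (fun i _ => Finset.prod_nonneg fun j hj => ?_)
      (fun i _ => Finset.prod_le_prod (fun j hj => ?_) (fun j hj => ?_))
    · exact sub_nonneg.2 (hxm (le_of_lt (Finset.mem_Ioi.1 hj)))
    · exact sub_nonneg.2 (hxm (le_of_lt (Finset.mem_Ioi.1 hj)))
    · nlinarith [hx i, hy i]
  have h2 : (∏ i, ∏ j ∈ Finset.Ioi i, (y j - y i)) ≤ ∏ i, ∏ j ∈ Finset.Ioi i, (x i + y j) := by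
    refine Finset.prod_le_prod (fun i _ => Finset.prod_nonneg fun j hj => ?_)
      (fun i _ => Finset.prod_le_prod (fun j hj => ?_) (fun j hj => ?_))
    · exact sub_nonneg.2 (hym (le_of_lt (Finset.mem_Ioi.1 hj)))
    · exact sub_nonneg.2 (hym (le_of_lt (Finset.mem_Ioi.1 hj)))
    · nlinarith [hx i, hy i]
  have h3 : (∏ i, Real.sqrt (x i * y i)) ≤ ∏ i, (x i + y i) := by
    refine Finset.prod_le_prod (fun i _ => Real.sqrt_nonneg _) (fun i _ => ?_)
    rw [show x i + y i = Real.sqrt ((x i + y i)^2) from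
      (Real.sqrt_sq (le_of_lt (add_pos (hx i) (hy i)))).symm]
    exact Real.sqrt_le_sqrt (by nlinarith [hx i, hy i])
  have n1 : 0 ≤ ∏ i, ∏ j ∈ Finset.Ioi i, (x j - x i) :=
    Finset.prod_nonneg fun i _ => Finset.prod_nonneg fun j hj =>
      sub_nonneg.2 (hxm (le_of_lt (Finset.mem_Ioi.1 hj)))
  have n2 : 0 ≤ ∏ i, ∏ j ∈ Finset.Ioi i, (y j - y i) :=
    Finset.prod_nonneg fun i _ => Finset.prod_nonneg fun j hj =>
      sub_nonneg.2 (hym (le_of_lt (Finset.mem_Ioi.1 hj)))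
  have n3 : 0 ≤ ∏ i, Real.sqrt (x i * y i) := Finset.prod_nonneg fun i _ => Real.sqrt_nonneg _
  calc (∏ i, ∏ j ∈ Finset.Ioi i, (x j - x i)) * (∏ i, ∏ j ∈ Finset.Ioi i, (y j - y i)) *
      ∏ i, Real.sqrt (x i * y i)
      ≤ (∏ i, ∏ j ∈ Finset.Ioi i, (x j + y i)) * (∏ i, ∏ j ∈ Finset.Ioi i, (x i + y j)) *
        ∏ i, (x i + y i) := by
        refine mul_le_mul (mul_le_mul h1 h2 n2 ?_) h3 n3 ?_
        · exact Finset.prod_nonneg fun i _ => Finset.prod_nonneg fun j _ =>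
            le_of_lt (add_pos (hx j) (hy i))
        · exact mul_nonneg
            (Finset.prod_nonneg fun i _ => Finset.prod_nonneg fun j _ =>
              le_of_lt (add_pos (hx j) (hy i)))
            (Finset.prod_nonneg fun i _ => Finset.prod_nonneg fun j _ =>
              le_of_lt (add_pos (hx i) (hy j)))
    _ = (∏ i, ∏ j ∈ Finset.Ioi i, (x i + y j)) * (∏ i, ∏ j ∈ Finset.Ioi i, (x j + y i)) *
        ∏ i, (x i + y i) := by ring

private lemma key_ineq {N : ℕ} (x y : Fin N → ℝ) (hx : ∀ i, 0 < x i) (hy : ∀ i, 0 < y i) :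
    |∏ i, ∏ j ∈ Finset.Ioi i, (x j - x i)| * |∏ i, ∏ j ∈ Finset.Ioi i, (y j - y i)| *
      ∏ i, Real.sqrt (x i * y i) ≤ ∏ i, ∏ j, (x i + y j) := by
  set σ := Tuple.sort x with hσ
  set τ := Tuple.sort y with hτ
  set x' : Fin N → ℝ := x ∘ σ with hx'
  set y' : Fin N → ℝ := y ∘ τ with hy'
  have hx'm : Monotone x' := Tuple.monotone_sort x
  have hy'm : Monotone y' := Tuple.monotone_sort y
  have hx'p : ∀ i, 0 < x' i := fun i => hx _
  have hy'p : ∀ i, 0 < y' i := fun i => hy _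
  have e1 : |∏ i, ∏ j ∈ Finset.Ioi i, (x j - x i)| =
      ∏ i, ∏ j ∈ Finset.Ioi i, (x' j - x' i) := by
    rw [← abs_vdm_perm x σ]
    exact abs_of_nonneg (Finset.prod_nonneg fun i _ => Finset.prod_nonneg fun j hj =>
      sub_nonneg.2 (hx'm (le_of_lt (Finset.mem_Ioi.1 hj))))
  have e2 : |∏ i, ∏ j ∈ Finset.Ioi i, (y j - y i)| =
      ∏ i, ∏ j ∈ Finset.Ioi i, (y' j - y' i) := by
    rw [← abs_vdm_perm y τ]
    exact abs_of_nonneg (Finset.prod_nonneg fun i _ => Finset.prod_nonneg fun j hj =>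
      sub_nonneg.2 (hy'm (le_of_lt (Finset.mem_Ioi.1 hj))))
  have e3 : ∏ i, Real.sqrt (x i * y i) = ∏ i, Real.sqrt (x' i * y' i) := by
    have l1 : ∀ i, 0 ≤ x i * y i := fun i => le_of_lt (mul_pos (hx i) (hy i))
    have l2 : ∀ i, 0 ≤ x' i * y' i := fun i => le_of_lt (mul_pos (hx'p i) (hy'p i))
    rw [prod_sqrt_aux _ l1, prod_sqrt_aux _ l2, Finset.prod_mul_distrib,
      Finset.prod_mul_distrib,
      show ∏ i, x' i = ∏ i, x i from Equiv.prod_comp σ x,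
      show ∏ i, y' i = ∏ i, y i from Equiv.prod_comp τ y]
  have e4 : ∏ i, ∏ j, (x i + y j) = ∏ i, ∏ j, (x' i + y' j) := by
    rw [show ∏ i, ∏ j, (x' i + y' j) = ∏ i, ∏ j, (x' i + y j) from
      Finset.prod_congr rfl fun i _ => Equiv.prod_comp τ (fun j => x' i + y j),
      show ∏ i, ∏ j, (x' i + y j) = ∏ i, ∏ j, (x i + y j) from
      Equiv.prod_comp σ (fun i => ∏ j, (x i + y j))]
  rw [e1, e2, e3, e4]
  exact key_mono x' y' hx'p hy'p hx'm hy'm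

private lemma vdm_bound {N : ℕ} (x : Fin N → ℝ) (hx : ∀ i, 0 ≤ x i) :
    |∏ i, ∏ j ∈ Finset.Ioi i, (x j - x i)| ≤ ∏ i, (1 + x i) ^ (N - 1) := by
  rw [Finset.abs_prod]
  have step1 : ∏ i, |∏ j ∈ Finset.Ioi i, (x j - x i)| ≤
      ∏ i, ∏ j ∈ Finset.Ioi i, ((1 + x i) * (1 + x j)) := by
    refine Finset.prod_le_prod (fun i _ => abs_nonneg _) (fun i _ => ?_)
    rw [Finset.abs_prod]
    refine Finset.prod_le_prod (fun j _ => abs_nonneg _) (fun j _ => ?_)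
    rw [abs_sub_le_iff]
    constructor <;> nlinarith [hx i, hx j]
  refine step1.trans (le_of_eq ?_)
  have swap : ∏ i, ∏ j ∈ Finset.Ioi i, (1 + x j) = ∏ j, ∏ i ∈ Finset.Iio j, (1 + x j) := by
    refine Finset.prod_comm' ?_
    intro i j; simp [Finset.mem_Ioi, Finset.mem_Iio]
  calc ∏ i, ∏ j ∈ Finset.Ioi i, ((1 + x i) * (1 + x j))
      = (∏ i, (1 + x i) ^ (Finset.Ioi i).card) * ∏ i, ∏ j ∈ Finset.Ioi i, (1 + x j) := by
        rw [← Finset.prod_mul_distrib]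
        exact Finset.prod_congr rfl fun i _ => by
          rw [Finset.prod_mul_distrib, Finset.prod_const]
    _ = (∏ i, (1 + x i) ^ (Finset.Ioi i).card) * ∏ i, (1 + x i) ^ (Finset.Iio i).card := by
        rw [swap]
        congr 1
        exact Finset.prod_congr rfl fun j _ => Finset.prod_const _
    _ = ∏ i, (1 + x i) ^ (N - 1) := by
        rw [← Finset.prod_mul_distrib]
        refine Finset.prod_congr rfl fun i _ => ?_
        rw [← pow_add]
        congr 1
        rw [Fin.card_Ioi, Fin.card_Iio]
        omega

private lemma poly_exp_bound (m : ℕ) (β : ℝ) (hβ : 0 < β) (d : ℕ) (hd : 1 ≤ d) (t : ℕ → ℝ)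
    (htd : 0 < t d) :
    ∃ C, 0 < C ∧ ∃ γ, 0 < γ ∧ ∀ s : ℝ, 0 ≤ s →
      (1+s)^m * Real.exp (-β * (∑ k ∈ Finset.Icc 1 d, t k * s ^ k)) ≤ C * Real.exp (-γ * s) := by
  set γ : ℝ := β * t d / 4 with hγdef
  have hγ : 0 < γ := by positivity
  set A : ℝ := ∑ k ∈ Finset.Icc 1 d, |t k| with hAdef
  have hA : 0 ≤ A := Finset.sum_nonneg fun k _ => abs_nonneg _
  set s₀ : ℝ := max 1 (2*A/t d) with hs₀def
  have hs₀1 : (1:ℝ) ≤ s₀ := le_max_left _ _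
  have hs₀0 : (0:ℝ) ≤ s₀ := by linarith
  have hQlow : ∀ s : ℝ, s₀ ≤ s → (t d / 2) * s ≤ ∑ k ∈ Finset.Icc 1 d, t k * s ^ k := by
    intro s hs
    have hs1 : (1:ℝ) ≤ s := le_trans hs₀1 hs
    have hs0 : (0:ℝ) ≤ s := by linarith
    obtain ⟨e, rfl⟩ : ∃ e, d = e + 1 := ⟨d-1, by omega⟩
    rw [Finset.sum_Icc_succ_top (by omega : 1 ≤ e + 1)]
    have hR : |∑ k ∈ Finset.Icc 1 e, t k * s ^ k| ≤ A * s ^ e := by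
      calc |∑ k ∈ Finset.Icc 1 e, t k * s ^ k| ≤ ∑ k ∈ Finset.Icc 1 e, |t k * s ^ k| :=
            Finset.abs_sum_le_sum_abs _ _
        _ ≤ ∑ k ∈ Finset.Icc 1 e, |t k| * s ^ e := by
            refine Finset.sum_le_sum fun k hk => ?_
            rw [abs_mul, abs_pow, abs_of_nonneg hs0]
            exact mul_le_mul_of_nonneg_left
              (pow_le_pow_right₀ hs1 (Finset.mem_Icc.1 hk).2) (abs_nonneg _)
        _ ≤ A * s ^ e := by
            rw [← Finset.sum_mul]
            refine mul_le_mul_of_nonneg_right ?_ (by positivity)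
            exact Finset.sum_le_sum_of_subset_of_nonneg
              (Finset.Icc_subset_Icc_right (by omega)) (fun k _ _ => abs_nonneg _)
    have hse : (1:ℝ) ≤ s ^ e := one_le_pow₀ hs1
    have h2A : 2 * A ≤ t (e+1) * s := by
      have h := le_trans (le_max_right _ _) hs
      rw [div_le_iff₀ htd] at h
      linarith [h]
    have hkey : A * s ^ e ≤ (t (e+1) / 2) * (s ^ e * s) := by
      have h1 : A ≤ (t (e+1) / 2) * s := by linarith
      calc A * s ^ e ≤ ((t (e+1) / 2) * s) * s ^ e :=
            mul_le_mul_of_nonneg_right h1 (by positivity)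
        _ = (t (e+1) / 2) * (s ^ e * s) := by ring
    have hneg : -(A * s ^ e) ≤ ∑ k ∈ Finset.Icc 1 e, t k * s ^ k := neg_le_of_abs_le hR
    have hps : t (e+1) * s ^ (e+1) = 2 * ((t (e+1)/2) * (s ^ e * s)) := by
      rw [pow_succ]; ring
    nlinarith [hneg, hkey]
  refine ⟨max ((m.factorial : ℝ)/γ^m * Real.exp γ)
      ((1+s₀)^m * Real.exp (β * (A * s₀^d)) * Real.exp (γ * s₀)), ?_, γ, hγ, ?_⟩
  · apply lt_max_of_lt_left
    positivity
  intro s hs0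
  rcases le_or_gt s₀ s with hcase | hcase
  · have hs1 : (1:ℝ) ≤ s := le_trans hs₀1 hcase
    have e1 : Real.exp (-β * (∑ k ∈ Finset.Icc 1 d, t k * s ^ k)) ≤ Real.exp (-(2*γ) * s) := by
      apply Real.exp_le_exp.2
      have h := hQlow s hcase
      have hβ2 : -(2*γ) * s = -β * ((t d / 2) * s) := by rw [hγdef]; ring
      rw [hβ2]
      exact mul_le_mul_of_nonpos_left h (by linarith)
    have e2 : (1+s)^m ≤ (m.factorial : ℝ)/γ^m * Real.exp (γ*(1+s)) := by
      have h := Real.pow_div_factorial_le_exp (x := γ*(1+s)) (by positivity) m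
      rw [mul_pow] at h
      rw [div_le_iff₀ (by positivity : (0:ℝ) < (m.factorial : ℝ))] at h
      have hγm : (0:ℝ) < γ^m := by positivity
      rw [div_mul_eq_mul_div, le_div_iff₀ hγm]
      nlinarith [h]
    calc (1+s)^m * Real.exp (-β * (∑ k ∈ Finset.Icc 1 d, t k * s ^ k))
        ≤ ((m.factorial : ℝ)/γ^m * Real.exp (γ*(1+s))) * Real.exp (-(2*γ) * s) := by
          refine mul_le_mul e2 e1 (Real.exp_pos _).le ?_
          positivity
      _ = ((m.factorial : ℝ)/γ^m * Real.exp γ) * Real.exp (-γ * s) := by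
          rw [mul_assoc, ← Real.exp_add, mul_assoc, ← Real.exp_add]
          ring_nf
      _ ≤ _ := mul_le_mul_of_nonneg_right (le_max_left _ _) (Real.exp_pos _).le
  · have hss : s ≤ s₀ := le_of_lt hcase
    have hQsmall : -β * (∑ k ∈ Finset.Icc 1 d, t k * s ^ k) ≤ β * (A * s₀^d) := by
      have habs : |∑ k ∈ Finset.Icc 1 d, t k * s ^ k| ≤ A * s₀^d := by
        calc |∑ k ∈ Finset.Icc 1 d, t k * s ^ k| ≤ ∑ k ∈ Finset.Icc 1 d, |t k * s ^ k| :=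
              Finset.abs_sum_le_sum_abs _ _
          _ ≤ ∑ k ∈ Finset.Icc 1 d, |t k| * s₀ ^ d := by
              refine Finset.sum_le_sum fun k hk => ?_
              rw [abs_mul, abs_pow, abs_of_nonneg hs0]
              refine mul_le_mul_of_nonneg_left ?_ (abs_nonneg _)
              calc s ^ k ≤ s₀ ^ k := pow_le_pow_left₀ hs0 hss k
                _ ≤ s₀ ^ d := pow_le_pow_right₀ hs₀1 (Finset.mem_Icc.1 hk).2
          _ = A * s₀^d := by rw [← Finset.sum_mul]
      nlinarith [neg_le_of_abs_le habs]
    calc (1+s)^m * Real.exp (-β * (∑ k ∈ Finset.Icc 1 d, t k * s ^ k))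
        ≤ (1+s₀)^m * Real.exp (β * (A * s₀^d)) := by
          refine mul_le_mul (pow_le_pow_left₀ (by linarith) (by linarith) m)
            (Real.exp_le_exp.2 hQsmall) (Real.exp_pos _).le (by positivity)
      _ = ((1+s₀)^m * Real.exp (β * (A * s₀^d)) * Real.exp (γ * s₀)) * Real.exp (-γ * s₀) := by
          rw [mul_assoc, mul_assoc, ← Real.exp_add]
          simp
      _ ≤ ((1+s₀)^m * Real.exp (β * (A * s₀^d)) * Real.exp (γ * s₀)) * Real.exp (-γ * s) := by
          refine mul_le_mul_of_nonneg_left (Real.exp_le_exp.2 ?_) (by positivity)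
          nlinarith [hγ]
      _ ≤ _ := mul_le_mul_of_nonneg_right (le_max_right _ _) (Real.exp_pos _).le

private lemma oneD (m : ℕ) (β a : ℝ) (hβ : 0 < β) (ha : 0 < a)
    (d : ℕ) (hd : 1 ≤ d) (t : ℕ → ℝ) (htd : 0 < t d) (V : ℝ → ℝ)
    (hV : ∀ x : ℝ, V x = -a * Real.log x + ∑ k ∈ Finset.Icc 1 d, t k * x ^ k) :
    IntegrableOn (fun s => (1+s)^m * Real.exp (-β * V s) / Real.sqrt s) (Set.Ioi 0) volume := by
  set c : ℝ := β * a with hcdef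
  have hc : 0 < c := by positivity
  set Q : ℝ → ℝ := fun s => ∑ k ∈ Finset.Icc 1 d, t k * s ^ k with hQdef
  have hQm : Measurable Q := by
    apply Finset.measurable_sum
    intro k _
    exact (measurable_id.pow_const k).const_mul (t k)
  have hVm : Measurable V := by
    have h : V = fun x => -a * Real.log x + Q x := funext hV
    rw [h]
    exact (Real.measurable_log.const_mul (-a)).add hQm
  have hmeas : Measurable (fun s => (1+s)^m * Real.exp (-β * V s) / Real.sqrt s) :=
    (((measurable_const.add measurable_id).pow_const m).mul
      ((hVm.const_mul (-β)).exp)).div Real.continuous_sqrt.measurable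
  have hsplit : ∀ s : ℝ, 0 < s →
      (1+s)^m * Real.exp (-β * V s) / Real.sqrt s
        = (1+s)^m * (s ^ c * Real.exp (-β * Q s)) / Real.sqrt s := by
    intro s hs
    rw [hV s]
    congr 2
    rw [show -β * (-a * Real.log s + Q s) = c * Real.log s + (-β * Q s) by rw [hcdef]; ring,
      Real.exp_add, Real.rpow_def_of_pos hs, mul_comm (Real.log s) c]
  have hgnn : ∀ s : ℝ, 0 < s → 0 ≤ (1+s)^m * Real.exp (-β * V s) / Real.sqrt s := by
    intro s hs
    have h1 : (0:ℝ) ≤ 1 + s := by linarith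
    positivity
  rw [show Set.Ioi (0:ℝ) = Set.Ioc 0 1 ∪ Set.Ioi 1 from
    (Set.Ioc_union_Ioi_eq_Ioi zero_le_one).symm]
  apply IntegrableOn.union
  · set A : ℝ := ∑ k ∈ Finset.Icc 1 d, |t k| with hAdef
    have hA : 0 ≤ A := Finset.sum_nonneg fun k _ => abs_nonneg _
    set K : ℝ := 2^m * Real.exp (β * A) with hKdef
    have base : IntegrableOn (fun s : ℝ => K * s ^ (c - 1/2)) (Set.Ioc 0 1) volume := by
      apply Integrable.const_mul
      have h1 : IntervalIntegrable (fun s : ℝ => s ^ (c - 1/2)) volume 0 1 :=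
        intervalIntegral.intervalIntegrable_rpow' (by linarith)
      exact (intervalIntegrable_iff_integrableOn_Ioc_of_le zero_le_one).1 h1
    refine Integrable.mono' base (hmeas.aestronglyMeasurable.restrict) ?_
    rw [ae_restrict_iff' measurableSet_Ioc]
    refine ae_of_all _ (fun s hs => ?_)
    obtain ⟨hs0, hs1⟩ := hs
    rw [Real.norm_eq_abs, abs_of_nonneg (hgnn s hs0), hsplit s hs0]
    have hQb : -β * Q s ≤ β * A := by
      have habs : |Q s| ≤ A := by
        rw [hQdef, hAdef]
        calc |∑ k ∈ Finset.Icc 1 d, t k * s ^ k| ≤ ∑ k ∈ Finset.Icc 1 d, |t k * s ^ k| :=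
              Finset.abs_sum_le_sum_abs _ _
          _ ≤ ∑ k ∈ Finset.Icc 1 d, |t k| := by
              refine Finset.sum_le_sum fun k hk => ?_
              rw [abs_mul, abs_pow, abs_of_nonneg hs0.le]
              have h2 : s ^ k ≤ 1 := pow_le_one₀ hs0.le hs1
              nlinarith [abs_nonneg (t k)]
      nlinarith [neg_le_of_abs_le habs]
    have hnum : (1+s)^m * (s ^ c * Real.exp (-β * Q s)) ≤ K * s ^ c := by
      rw [hKdef]
      have h2 : (1+s)^m ≤ 2^m := pow_le_pow_left₀ (by linarith) (by linarith) m
      have h3 : Real.exp (-β * Q s) ≤ Real.exp (β * A) := Real.exp_le_exp.2 hQb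
      have hsc : (0:ℝ) ≤ s ^ c := Real.rpow_nonneg hs0.le c
      calc (1+s)^m * (s ^ c * Real.exp (-β * Q s)) ≤ 2^m * (s ^ c * Real.exp (β * A)) := by
            refine mul_le_mul h2 ?_ (by positivity) (by positivity)
            exact mul_le_mul_of_nonneg_left h3 hsc
        _ = 2^m * Real.exp (β * A) * s ^ c := by ring
    calc (1+s)^m * (s ^ c * Real.exp (-β * Q s)) / Real.sqrt s ≤ K * s ^ c / Real.sqrt s :=
          (div_le_div_iff_of_pos_right (Real.sqrt_pos.2 hs0)).2 hnum
      _ = K * s ^ (c - 1/2) := by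
          rw [Real.sqrt_eq_rpow, mul_div_assoc, ← Real.rpow_sub hs0]
  · set mc : ℕ := ⌈c⌉₊ with hmcdef
    obtain ⟨C, hC, γ, hγ, hbound⟩ := poly_exp_bound (m + mc) β hβ d hd t htd
    have base : IntegrableOn (fun s : ℝ => C * Real.exp (-γ * s)) (Set.Ioi 1) volume :=
      (exp_neg_integrableOn_Ioi 1 hγ).const_mul C
    refine Integrable.mono' base (hmeas.aestronglyMeasurable.restrict) ?_
    rw [ae_restrict_iff' measurableSet_Ioi]
    refine ae_of_all _ (fun s hs => ?_)
    rw [Set.mem_Ioi] at hs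
    have hs0 : (0:ℝ) < s := by linarith
    rw [Real.norm_eq_abs, abs_of_nonneg (hgnn s hs0), hsplit s hs0]
    have h1 : (1:ℝ) ≤ Real.sqrt s := by
      rw [show (1:ℝ) = Real.sqrt 1 from Real.sqrt_one.symm]
      exact Real.sqrt_le_sqrt (by linarith)
    have hnum : (1+s)^m * (s ^ c * Real.exp (-β * Q s)) ≤ C * Real.exp (-γ * s) := by
      have h2 : s ^ c ≤ (1+s)^mc := by
        calc s ^ c ≤ s ^ (mc:ℝ) :=
              Real.rpow_le_rpow_of_exponent_le (by linarith) (Nat.le_ceil c)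
          _ = s ^ mc := Real.rpow_natCast s mc
          _ ≤ (1+s)^mc := pow_le_pow_left₀ (by linarith) (by linarith) mc
      calc (1+s)^m * (s ^ c * Real.exp (-β * Q s))
          ≤ (1+s)^m * ((1+s)^mc * Real.exp (-β * Q s)) := by
            refine mul_le_mul_of_nonneg_left ?_ (by positivity)
            exact mul_le_mul_of_nonneg_right h2 (Real.exp_pos _).le
        _ = (1+s)^(m+mc) * Real.exp (-β * Q s) := by rw [pow_add]; ring
        _ ≤ C * Real.exp (-γ * s) := hbound s hs0.le
    calc (1+s)^m * (s ^ c * Real.exp (-β * Q s)) / Real.sqrt s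
        ≤ (1+s)^m * (s ^ c * Real.exp (-β * Q s)) / 1 := by
          apply div_le_div_of_nonneg_left ?_ ?_ h1
          · have hsc : (0:ℝ) ≤ s ^ c := Real.rpow_nonneg hs0.le c
            positivity
          · linarith
      _ = (1+s)^m * (s ^ c * Real.exp (-β * Q s)) := div_one _
      _ ≤ C * Real.exp (-γ * s) := hnum

end Aux

/-- Convergence of the Cauchy two-matrix eigenvalue integral: the Cauchy eigenvalue weight
`w(x,y) = Δ(x)² Δ(y)² exp(−(N/T) ∑_i (V₁(x_i)+V₂(y_i))) ∏_{i,j} (x_i+y_j)⁻¹`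
is integrable on `(0,∞)^N × (0,∞)^N` with respect to Lebesgue measure, and its integral is
strictly positive. -/
theorem cauchy_model_partition_function_converges
    (N : ℕ) (hN : 1 ≤ N) (T : ℝ) (hT : 0 < T)
    (a₁ a₂ : ℝ) (ha₁ : 0 < a₁) (ha₂ : 0 < a₂)
    (d₁ d₂ : ℕ) (hd₁ : 1 ≤ d₁) (hd₂ : 1 ≤ d₂)
    (t₁ t₂ : ℕ → ℝ) (ht₁ : 0 < t₁ d₁) (ht₂ : 0 < t₂ d₂)
    -- the potentials V_i(x) = −t₋₁^{(i)} ln x + ∑_{k=1}^{d_i} t_k^{(i)} x^k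
    (V₁ V₂ : ℝ → ℝ)
    (hV₁ : ∀ x : ℝ, V₁ x = -a₁ * Real.log x + ∑ k ∈ Finset.Icc 1 d₁, t₁ k * x ^ k)
    (hV₂ : ∀ x : ℝ, V₂ x = -a₂ * Real.log x + ∑ k ∈ Finset.Icc 1 d₂, t₂ k * x ^ k)
    -- the domain (0,∞)^N × (0,∞)^N
    (S : Set ((Fin N → ℝ) × (Fin N → ℝ)))
    (hS : S = {p | (∀ i, 0 < p.1 i) ∧ (∀ j, 0 < p.2 j)})
    -- the Vandermonde product
    (Δ : (Fin N → ℝ) → ℝ)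
    (hΔ : ∀ x : Fin N → ℝ, Δ x = ∏ i : Fin N, ∏ j ∈ Finset.Ioi i, (x j - x i))
    -- the Cauchy eigenvalue weight
    (w : ((Fin N → ℝ) × (Fin N → ℝ)) → ℝ)
    (hw : ∀ p, w p = (Δ p.1) ^ 2 * (Δ p.2) ^ 2 *
        Real.exp (-((N : ℝ) / T) * ∑ i : Fin N, (V₁ (p.1 i) + V₂ (p.2 i))) *
        ∏ i : Fin N, ∏ j : Fin N, (p.1 i + p.2 j)⁻¹) :
    IntegrableOn w S volume ∧ 0 < ∫ p in S, w p := by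
  classical
  have hNpos : (0:ℝ) < (N:ℝ) := by exact_mod_cast hN
  have hβ : (0:ℝ) < (N:ℝ)/T := div_pos hNpos hT
  -- measurability
  have hV₁m : Measurable V₁ := by
    rw [show V₁ = fun x => -a₁ * Real.log x + ∑ k ∈ Finset.Icc 1 d₁, t₁ k * x ^ k
      from funext hV₁]
    exact (Real.measurable_log.const_mul (-a₁)).add
      (Finset.measurable_sum _ fun k _ => (measurable_id.pow_const k).const_mul (t₁ k))
  have hV₂m : Measurable V₂ := by
    rw [show V₂ = fun x => -a₂ * Real.log x + ∑ k ∈ Finset.Icc 1 d₂, t₂ k * x ^ k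
      from funext hV₂]
    exact (Real.measurable_log.const_mul (-a₂)).add
      (Finset.measurable_sum _ fun k _ => (measurable_id.pow_const k).const_mul (t₂ k))
  have hΔm : Measurable Δ := by
    rw [show Δ = fun x => ∏ i : Fin N, ∏ j ∈ Finset.Ioi i, (x j - x i) from funext hΔ]
    exact Finset.measurable_prod _ fun i _ => Finset.measurable_prod _ fun j _ =>
      (measurable_pi_apply j).sub (measurable_pi_apply i)
  have hwm : Measurable w := by
    rw [show w = fun p => (Δ p.1) ^ 2 * (Δ p.2) ^ 2 *
        Real.exp (-((N : ℝ) / T) * ∑ i : Fin N, (V₁ (p.1 i) + V₂ (p.2 i))) *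
        ∏ i : Fin N, ∏ j : Fin N, (p.1 i + p.2 j)⁻¹ from funext hw]
    refine ((((hΔm.comp measurable_fst).pow_const 2).mul
      ((hΔm.comp measurable_snd).pow_const 2)).mul ?_).mul ?_
    · exact ((Finset.measurable_sum _ fun i _ =>
        (hV₁m.comp ((measurable_pi_apply i).comp measurable_fst)).add
          (hV₂m.comp ((measurable_pi_apply i).comp measurable_snd))).const_mul
            (-((N:ℝ)/T))).exp
    · exact Finset.measurable_prod _ fun i _ => Finset.measurable_prod _ fun j _ =>
        (((measurable_pi_apply i).comp measurable_fst).add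
          ((measurable_pi_apply j).comp measurable_snd)).inv
  -- S is open, measurable, of positive measure
  have hSopen : IsOpen S := by
    have hSeq : S = (Set.univ.pi fun _ : Fin N => Set.Ioi (0:ℝ)) ×ˢ
        (Set.univ.pi fun _ : Fin N => Set.Ioi (0:ℝ)) := by
      rw [hS]; ext p; simp [Set.mem_pi]
    rw [hSeq]
    exact ((isOpen_set_pi Set.finite_univ fun _ _ => isOpen_Ioi)).prod
      ((isOpen_set_pi Set.finite_univ fun _ _ => isOpen_Ioi))
  have hSmeas : MeasurableSet S := hSopen.measurableSet
  have hSpos : 0 < volume S := by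
    refine hSopen.measure_pos volume ⟨(fun _ => 1, fun _ => 1), ?_⟩
    rw [hS]
    exact ⟨fun i => one_pos, fun j => one_pos⟩
  -- the majorant
  set g₁ : ℝ → ℝ := fun s => (1+s)^(N-1) * Real.exp (-((N:ℝ)/T) * V₁ s) / Real.sqrt s
    with hg₁def
  set g₂ : ℝ → ℝ := fun s => (1+s)^(N-1) * Real.exp (-((N:ℝ)/T) * V₂ s) / Real.sqrt s
    with hg₂def
  have hg₁ : IntegrableOn g₁ (Set.Ioi 0) volume :=
    oneD (N-1) ((N:ℝ)/T) a₁ hβ ha₁ d₁ hd₁ t₁ ht₁ V₁ hV₁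
  have hg₂ : IntegrableOn g₂ (Set.Ioi 0) volume :=
    oneD (N-1) ((N:ℝ)/T) a₂ hβ ha₂ d₂ hd₂ t₂ ht₂ V₂ hV₂
  set G₁ : ℝ → ℝ := (Set.Ioi (0:ℝ)).indicator g₁ with hG₁def
  set G₂ : ℝ → ℝ := (Set.Ioi (0:ℝ)).indicator g₂ with hG₂def
  have hG₁i : Integrable G₁ volume := (integrable_indicator_iff measurableSet_Ioi).2 hg₁
  have hG₂i : Integrable G₂ volume := (integrable_indicator_iff measurableSet_Ioi).2 hg₂
  set Maj : ((Fin N → ℝ) × (Fin N → ℝ)) → ℝ :=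
    fun p => (∏ i, G₁ (p.1 i)) * (∏ i, G₂ (p.2 i)) with hMajdef
  have hMaj : Integrable Maj volume := by
    rw [hMajdef, show (volume : Measure ((Fin N → ℝ) × (Fin N → ℝ)))
      = (volume : Measure (Fin N → ℝ)).prod volume from Measure.volume_eq_prod _ _]
    exact (Integrable.fintype_prod (f := fun _ : Fin N => G₁) fun i => hG₁i).mul_prod
      (Integrable.fintype_prod (f := fun _ : Fin N => G₂) fun i => hG₂i)
  -- pointwise bound on S
  have hbound : ∀ p ∈ S, ‖w p‖ ≤ Maj p := by
    rintro ⟨x, y⟩ hp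
    rw [hS] at hp
    obtain ⟨hx, hy⟩ := hp
    have hx' : ∀ i, 0 < x i := hx
    have hy' : ∀ i, 0 < y i := hy
    have hP : 0 < ∏ i, ∏ j, (x i + y j) :=
      Finset.prod_pos fun i _ => Finset.prod_pos fun j _ => add_pos (hx' i) (hy' j)
    have hSx : 0 < ∏ i, Real.sqrt (x i) :=
      Finset.prod_pos fun i _ => Real.sqrt_pos.2 (hx' i)
    have hSy : 0 < ∏ i, Real.sqrt (y i) :=
      Finset.prod_pos fun i _ => Real.sqrt_pos.2 (hy' i)
    have hsq : ∏ i, Real.sqrt (x i * y i) = (∏ i, Real.sqrt (x i)) * ∏ i, Real.sqrt (y i) := by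
      rw [← Finset.prod_mul_distrib]
      exact Finset.prod_congr rfl fun i _ => Real.sqrt_mul (hx' i).le _
    have hkey : |Δ x| * |Δ y| * ((∏ i, Real.sqrt (x i)) * ∏ i, Real.sqrt (y i))
        ≤ ∏ i, ∏ j, (x i + y j) := by
      rw [← hsq, hΔ x, hΔ y]
      exact key_ineq x y hx' hy'
    have hBx : |Δ x| ≤ ∏ i, (1 + x i)^(N-1) := by
      rw [hΔ x]; exact vdm_bound x (fun i => (hx' i).le)
    have hBy : |Δ y| ≤ ∏ i, (1 + y i)^(N-1) := by
      rw [hΔ y]; exact vdm_bound y (fun i => (hy' i).le)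
    have hBxnn : (0:ℝ) ≤ ∏ i, (1 + x i)^(N-1) :=
      Finset.prod_nonneg fun i _ => pow_nonneg (by linarith [hx' i]) _
    have hBynn : (0:ℝ) ≤ ∏ i, (1 + y i)^(N-1) :=
      Finset.prod_nonneg fun i _ => pow_nonneg (by linarith [hy' i]) _
    have hEsplit : Real.exp (-((N:ℝ)/T) * ∑ i : Fin N, (V₁ (x i) + V₂ (y i)))
        = (∏ i, Real.exp (-((N:ℝ)/T) * V₁ (x i)))
          * ∏ i, Real.exp (-((N:ℝ)/T) * V₂ (y i)) := by
      rw [← Real.exp_sum, ← Real.exp_sum, ← Real.exp_add]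
      congr 1
      rw [← Finset.sum_add_distrib, Finset.mul_sum]
      exact Finset.sum_congr rfl fun i _ => by ring
    have hinv : (∏ i : Fin N, ∏ j : Fin N, (x i + y j)⁻¹)
        = (∏ i : Fin N, ∏ j : Fin N, (x i + y j))⁻¹ := by
      rw [← Finset.prod_inv_distrib]
      exact Finset.prod_congr rfl fun i _ => Finset.prod_inv_distrib _
    have hwval : w (x, y) = (|Δ x| * |Δ y|) * (|Δ x| * |Δ y|) *
        (Real.exp (-((N:ℝ)/T) * ∑ i : Fin N, (V₁ (x i) + V₂ (y i)))
          * (∏ i : Fin N, ∏ j : Fin N, (x i + y j))⁻¹) := by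
      rw [hw (x, y)]
      dsimp only
      rw [hinv, ← sq_abs (Δ x), ← sq_abs (Δ y)]
      ring
    have hwnn : 0 ≤ w (x, y) := by
      rw [hwval]
      exact mul_nonneg
        (mul_nonneg (mul_nonneg (abs_nonneg _) (abs_nonneg _))
          (mul_nonneg (abs_nonneg _) (abs_nonneg _)))
        (mul_nonneg (Real.exp_pos _).le (inv_nonneg.2 hP.le))
    rw [Real.norm_eq_abs, abs_of_nonneg hwnn, hwval]
    have h1 : |Δ x| * |Δ y| ≤ (∏ i, (1 + x i)^(N-1)) * ∏ i, (1 + y i)^(N-1) :=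
      mul_le_mul hBx hBy (abs_nonneg _) hBxnn
    have h2 : |Δ x| * |Δ y| ≤ (∏ i, ∏ j, (x i + y j))
        / ((∏ i, Real.sqrt (x i)) * ∏ i, Real.sqrt (y i)) := by
      rw [le_div_iff₀ (by positivity)]
      exact hkey
    have hMx : (∏ i, G₁ (x i)) = (∏ i, (1 + x i)^(N-1))
        * (∏ i, Real.exp (-((N:ℝ)/T) * V₁ (x i))) / ∏ i, Real.sqrt (x i) := by
      rw [Finset.prod_congr rfl (fun i _ =>
        Set.indicator_of_mem (Set.mem_Ioi.2 (hx' i)) g₁), hg₁def]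
      dsimp only
      rw [Finset.prod_div_distrib, Finset.prod_mul_distrib]
    have hMy : (∏ i, G₂ (y i)) = (∏ i, (1 + y i)^(N-1))
        * (∏ i, Real.exp (-((N:ℝ)/T) * V₂ (y i))) / ∏ i, Real.sqrt (y i) := by
      rw [Finset.prod_congr rfl (fun i _ =>
        Set.indicator_of_mem (Set.mem_Ioi.2 (hy' i)) g₂), hg₂def]
      dsimp only
      rw [Finset.prod_div_distrib, Finset.prod_mul_distrib]
    calc (|Δ x| * |Δ y|) * (|Δ x| * |Δ y|) *
        (Real.exp (-((N:ℝ)/T) * ∑ i : Fin N, (V₁ (x i) + V₂ (y i)))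
          * (∏ i : Fin N, ∏ j : Fin N, (x i + y j))⁻¹)
        ≤ (((∏ i, (1 + x i)^(N-1)) * ∏ i, (1 + y i)^(N-1)) *
            ((∏ i, ∏ j, (x i + y j))
              / ((∏ i, Real.sqrt (x i)) * ∏ i, Real.sqrt (y i)))) *
          (Real.exp (-((N:ℝ)/T) * ∑ i : Fin N, (V₁ (x i) + V₂ (y i)))
            * (∏ i : Fin N, ∏ j : Fin N, (x i + y j))⁻¹) := by
          refine mul_le_mul_of_nonneg_right
            (mul_le_mul h1 h2 (mul_nonneg (abs_nonneg _) (abs_nonneg _))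
              (mul_nonneg hBxnn hBynn))
            (mul_nonneg (Real.exp_pos _).le (inv_nonneg.2 hP.le))
      _ = Maj (x, y) := by
          rw [hMajdef]
          dsimp only
          rw [hMx, hMy, hEsplit]
          field_simp
  -- integrability
  have hInt : IntegrableOn w S volume := by
    refine Integrable.mono' (hMaj.integrableOn) (hwm.aestronglyMeasurable.restrict) ?_
    rw [ae_restrict_iff' hSmeas]
    exact ae_of_all _ hbound
  refine ⟨hInt, ?_⟩
  -- positivity
  have hwnnS : ∀ p ∈ S, 0 ≤ w p := by
    rintro ⟨x, y⟩ hp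
    rw [hS] at hp
    obtain ⟨hx, hy⟩ := hp
    rw [hw (x, y)]
    dsimp only
    refine mul_nonneg (mul_nonneg (mul_nonneg (sq_nonneg _) (sq_nonneg _))
      (Real.exp_pos _).le) ?_
    exact Finset.prod_nonneg fun i _ => Finset.prod_nonneg fun j _ =>
      inv_nonneg.2 (add_pos (hx i) (hy j)).le
  set Z : Set (Fin N → ℝ) :=
    ⋃ (i : Fin N), ⋃ (j : Fin N), ⋃ (_ : i ≠ j), {x : Fin N → ℝ | x i = x j} with hZdef
  have hZnull : volume Z = 0 := by
    refine measure_iUnion_null fun i => measure_iUnion_null fun j => measure_iUnion_null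
      fun hij => ?_
    have h : {x : Fin N → ℝ | x i = x j} =
        (LinearMap.ker ((LinearMap.proj i : (Fin N → ℝ) →ₗ[ℝ] ℝ) - LinearMap.proj j)
          : Set _) := by
      ext x
      simp [LinearMap.mem_ker, sub_eq_zero, LinearMap.sub_apply, LinearMap.proj_apply, eq_comm]
    rw [h]
    apply Measure.addHaar_submodule
    intro htop
    have h1 := LinearMap.ker_eq_top.1 htop
    have h2 := congrFun (congrArg (fun f => f.toFun) h1) (Pi.single i 1)
    simp [LinearMap.sub_apply, LinearMap.proj_apply, Pi.single_eq_same,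
      Pi.single_eq_of_ne (Ne.symm hij)] at h2
  set Bad : Set ((Fin N → ℝ) × (Fin N → ℝ)) :=
    (Z ×ˢ (Set.univ : Set (Fin N → ℝ))) ∪ ((Set.univ : Set (Fin N → ℝ)) ×ˢ Z) with hBaddef
  have hBadnull : volume Bad = 0 := by
    refine measure_union_null ?_ ?_
    · rw [show (volume : Measure ((Fin N → ℝ) × (Fin N → ℝ)))
        = (volume : Measure (Fin N → ℝ)).prod volume from Measure.volume_eq_prod _ _,
        Measure.prod_prod, hZnull, zero_mul]
    · rw [show (volume : Measure ((Fin N → ℝ) × (Fin N → ℝ)))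
        = (volume : Measure (Fin N → ℝ)).prod volume from Measure.volume_eq_prod _ _,
        Measure.prod_prod, hZnull, mul_zero]
  have hΔne : ∀ v : Fin N → ℝ, v ∉ Z → Δ v ≠ 0 := by
    intro v hvZ h0
    rw [hΔ v] at h0
    obtain ⟨i, -, h⟩ := Finset.prod_eq_zero_iff.1 h0
    obtain ⟨j, hj, h2⟩ := Finset.prod_eq_zero_iff.1 h
    refine hvZ ?_
    rw [hZdef]
    refine Set.mem_iUnion.2 ⟨i, Set.mem_iUnion.2 ⟨j, Set.mem_iUnion.2 ⟨?_, ?_⟩⟩⟩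
    · exact ne_of_lt (Finset.mem_Ioi.1 hj)
    · exact (sub_eq_zero.1 h2).symm
  have hsupp : S \ Bad ⊆ Function.support w ∩ S := by
    rintro ⟨x, y⟩ ⟨hpS, hpB⟩
    refine ⟨?_, hpS⟩
    have hxy := hpS
    rw [hS] at hxy
    obtain ⟨hx, hy⟩ := hxy
    have hΔx : Δ x ≠ 0 := by
      refine hΔne x fun hxZ => hpB ?_
      exact Set.mem_union_left _ ⟨hxZ, Set.mem_univ _⟩
    have hΔy : Δ y ≠ 0 := by
      refine hΔne y fun hyZ => hpB ?_
      exact Set.mem_union_right _ ⟨Set.mem_univ _, hyZ⟩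
    have : w (x, y) ≠ 0 := by
      rw [hw (x, y)]
      dsimp only
      refine mul_ne_zero (mul_ne_zero (mul_ne_zero ?_ ?_) (Real.exp_ne_zero _)) ?_
      · exact pow_ne_zero 2 hΔx
      · exact pow_ne_zero 2 hΔy
      · rw [Finset.prod_ne_zero_iff]
        intro i _
        rw [Finset.prod_ne_zero_iff]
        intro j _
        exact inv_ne_zero (add_pos (hx i) (hy j)).ne'
    exact this
  have hms : 0 < volume (Function.support w ∩ S) := by
    rcases eq_or_lt_of_le (zero_le : (0:ENNReal) ≤ volume (Function.support w ∩ S)) with h0 | h0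
    · exfalso
      have hsub : S ⊆ (Function.support w ∩ S) ∪ Bad := by
        intro p hp
        by_cases hb : p ∈ Bad
        · exact Or.inr hb
        · exact Or.inl (hsupp ⟨hp, hb⟩)
      have hle : volume S ≤ volume ((Function.support w ∩ S) ∪ Bad) := measure_mono hsub
      have hle2 : volume ((Function.support w ∩ S) ∪ Bad)
          ≤ volume (Function.support w ∩ S) + volume Bad := measure_union_le _ _
      rw [← h0, hBadnull, add_zero] at hle2
      exact absurd (lt_of_lt_of_le hSpos (hle.trans hle2)) (lt_irrefl 0)
    · exact h0
  have hae : (0 : ((Fin N → ℝ) × (Fin N → ℝ)) → ℝ) ≤ᶠ[ae (volume.restrict S)] w := by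
    rw [Filter.EventuallyLE, ae_restrict_iff' hSmeas]
    refine ae_of_all _ (fun p hp => ?_)
    simpa using hwnnS p hp
  rw [setIntegral_pos_iff_support_of_nonneg_ae hae hInt]
  exact hms
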